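/- Let S be a finite set and L : {0,1}^S → {0,1} a monotone Boolean function. Let i1, i2 be two distinct elements of S and let X = (X(i))_{i∈S} be i.i.d. Bernoulli(p) random variables. Let Y be the random configuration obtained from X by replacing both X(i1) and X(i2) with a single fresh Bernoulli(p) random variable V independent of (X(i))_{i≠i1,i2} (i.e. Y(i1)=Y(i2)=V, Y(i)=X(i) otherwise). Then P[L(X)=1] − P[L(Y)=1] = p(1−p)·( P[L^X_{i1,i2} = f_∨] − P[L^X_{i1,i2} = f_∧] ), where L^X_{i1,i2}(z1,z2) denotes L evaluated at the configuration equal to X off {i1,i2} and equal to z1 at i1 and z2 at i2, and f_∨(z1,z2)=z1∨z2, f_∧(z1,z2)=z1∧z2. -/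

import Mathlib

open Finset

private lemma fiber_sum {S : Type*} [Fintype S] [DecidableEq S] (i1 i2 : S) (h12 : i1 ≠ i2)
    (F : (S → Bool) → Bool → Bool → ℝ)
    (hF : ∀ x c d, F (Function.update (Function.update x i1 c) i2 d) = F x) :
    ∑ x : S → Bool, ∑ a : Bool, ∑ b : Bool, F x a b
      = 4 * ∑ x : S → Bool, F x (x i1) (x i2) := by
  have hinv : Function.Involutive (fun q : (S → Bool) × Bool × Bool =>
      (Function.update (Function.update q.1 i1 q.2.1) i2 q.2.2, q.1 i1, q.1 i2)) := by
    rintro ⟨x, a, b⟩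
    refine Prod.ext ?_ (Prod.ext ?_ ?_)
    · funext i
      simp only [Function.update_apply]
      split_ifs <;> simp_all
    · simp [Function.update_of_ne h12]
    · simp
  have key : ∑ q : (S → Bool) × Bool × Bool, F q.1 q.2.1 q.2.2
      = ∑ q : (S → Bool) × Bool × Bool, F q.1 (q.1 i1) (q.1 i2) := by
    rw [← Equiv.sum_comp hinv.toPerm (fun q => F q.1 q.2.1 q.2.2)]
    refine Fintype.sum_congr _ _ fun q => ?_
    show F (Function.update (Function.update q.1 i1 q.2.1) i2 q.2.2) (q.1 i1) (q.1 i2)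
        = F q.1 (q.1 i1) (q.1 i2)
    rw [hF]
  calc ∑ x : S → Bool, ∑ a : Bool, ∑ b : Bool, F x a b
      = ∑ q : (S → Bool) × Bool × Bool, F q.1 q.2.1 q.2.2 := by
        simp [Fintype.sum_prod_type]
    _ = ∑ q : (S → Bool) × Bool × Bool, F q.1 (q.1 i1) (q.1 i2) := key
    _ = ∑ x : S → Bool, ∑ a : Bool, ∑ b : Bool, F x (x i1) (x i2) := by
        simp [Fintype.sum_prod_type]
        exact Finset.sum_congr rfl fun x _ => by ring
    _ = 4 * ∑ x : S → Bool, F x (x i1) (x i2) := by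
        simp only [Fintype.sum_bool, Finset.mul_sum]
        exact Finset.sum_congr rfl fun x _ => by ring

/-- double update collapses -/
private lemma upd_upd {S : Type*} [DecidableEq S] (i1 i2 : S) (a b c d : Bool) (x : S → Bool) :
    Function.update (Function.update (Function.update (Function.update x i1 c) i2 d) i1 a) i2 b
      = Function.update (Function.update x i1 a) i2 b := by
  funext i
  simp only [Function.update_apply]
  split_ifs <;> rfl

/-- the product over the remaining coordinates is invariant under updates at i1, i2 -/
private lemma prod_inv {S : Type*} [Fintype S] [DecidableEq S] (i1 i2 : S)
    (p : ℝ) (c d : Bool) (x : S → Bool) :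
    (∏ i ∈ (Finset.univ.erase i1).erase i2,
        if (Function.update (Function.update x i1 c) i2 d) i then p else 1 - p)
      = ∏ i ∈ (Finset.univ.erase i1).erase i2, if x i then p else 1 - p := by
  refine Finset.prod_congr rfl fun i hi => ?_
  rw [Finset.mem_erase, Finset.mem_erase] at hi
  rw [Function.update_of_ne hi.1, Function.update_of_ne hi.2.1]

/-- factor the full product -/
private lemma prod_split {S : Type*} [Fintype S] [DecidableEq S] (i1 i2 : S) (h12 : i1 ≠ i2)
    (f : Bool → ℝ) (x : S → Bool) :
    (∏ i, f (x i))
      = f (x i1) * (f (x i2) * ∏ i ∈ (Finset.univ.erase i1).erase i2, f (x i)) := by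
  rw [← Finset.mul_prod_erase Finset.univ (fun i => f (x i)) (Finset.mem_univ i1),
    ← Finset.mul_prod_erase (Finset.univ.erase i1) (fun i => f (x i))
      (Finset.mem_erase.2 ⟨Ne.symm h12, Finset.mem_univ i2⟩)]

private lemma upd_self {S : Type*} [DecidableEq S] (i1 i2 : S) (x : S → Bool) :
    Function.update (Function.update x i1 (x i1)) i2 (x i2) = x := by
  rw [Function.update_eq_self, Function.update_eq_self]

private lemma true_le_eq (b : Bool) (h : true ≤ b) : b = true := by
  cases b
  · exact absurd h (by decide)
  · rfl

private lemma upd_le {S : Type*} [DecidableEq S] (i1 i2 : S) (a b a' b' : Bool)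
    (ha : a ≤ a') (hb : b ≤ b') (x : S → Bool) :
    Function.update (Function.update x i1 a) i2 b
      ≤ Function.update (Function.update x i1 a') i2 b' := by
  intro i
  simp only [Function.update_apply]
  split_ifs <;> first | exact hb | exact ha | exact le_rfl

/-- contraction of two points lemma for monotone Boolean functions
applied to i.i.d. Bernoulli(p) input. -/
theorem stmt_0 {S : Type*} [Fintype S] [DecidableEq S]
    (L : (S → Bool) → Bool) (hL : Monotone L)
    (i1 i2 : S) (h12 : i1 ≠ i2) (p : ℝ) (hp0 : 0 ≤ p) (hp1 : p ≤ 1) :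
    (∑ x : S → Bool, (∏ i, if x i then p else 1 - p) * (if L x then 1 else 0))
      - (∑ x : S → Bool, ∑ v : Bool,
          ((∏ i, if x i then p else 1 - p) * (if v then p else 1 - p)) *
            (if L (Function.update (Function.update x i1 v) i2 v) then 1 else 0))
    = p * (1 - p) *
      ((∑ x : S → Bool, (∏ i, if x i then p else 1 - p) *
          (if ∀ z1 z2 : Bool,
              L (Function.update (Function.update x i1 z1) i2 z2) = (z1 || z2)
            then 1 else 0))
        - (∑ x : S → Bool, (∏ i, if x i then p else 1 - p) *
          (if ∀ z1 z2 : Bool,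
              L (Function.update (Function.update x i1 z1) i2 z2) = (z1 && z2)
            then 1 else 0))) := by
  classical
  -- abbreviations (only informal): wt v = if v then p else 1-p ; W x = product over erased set
  -- Step 1: rewrite each of the four sums via the fiber decomposition
  have e1 : (∑ x : S → Bool, (∏ i, if x i then p else 1 - p) * (if L x then 1 else 0))
      = (1/4) * ∑ x : S → Bool, ∑ a : Bool, ∑ b : Bool,
          (if a then p else 1 - p) * (if b then p else 1 - p) *
            ((∏ i ∈ (Finset.univ.erase i1).erase i2, if x i then p else 1 - p) *
              (if L (Function.update (Function.update x i1 a) i2 b) then 1 else 0)) := by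
    have h := fiber_sum i1 i2 h12
      (fun x a b => (if a then p else 1 - p) * (if b then p else 1 - p) *
        ((∏ i ∈ (Finset.univ.erase i1).erase i2, if x i then p else 1 - p) *
          (if L (Function.update (Function.update x i1 a) i2 b) then 1 else 0)))
      (by
        intro x c d
        funext a b
        simp only [upd_upd, prod_inv])
    rw [h]
    rw [show ((1:ℝ)/4) * (4 * ∑ x : S → Bool,
        (if x i1 then p else 1 - p) * (if x i2 then p else 1 - p) *
          ((∏ i ∈ (Finset.univ.erase i1).erase i2, if x i then p else 1 - p) *
            (if L (Function.update (Function.update x i1 (x i1)) i2 (x i2)) then 1 else 0)))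
      = ∑ x : S → Bool,
        (if x i1 then p else 1 - p) * (if x i2 then p else 1 - p) *
          ((∏ i ∈ (Finset.univ.erase i1).erase i2, if x i then p else 1 - p) *
            (if L (Function.update (Function.update x i1 (x i1)) i2 (x i2)) then 1 else 0))
      from by ring]
    refine Finset.sum_congr rfl fun x _ => ?_
    rw [prod_split i1 i2 h12 (fun v => if v then p else 1 - p) x, upd_self]
    ring
  have e2 : (∑ x : S → Bool, ∑ v : Bool,
        ((∏ i, if x i then p else 1 - p) * (if v then p else 1 - p)) *
          (if L (Function.update (Function.update x i1 v) i2 v) then 1 else 0))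
      = (1/4) * ∑ x : S → Bool, ∑ a : Bool, ∑ b : Bool,
          (if a then p else 1 - p) * (if b then p else 1 - p) *
            ((∏ i ∈ (Finset.univ.erase i1).erase i2, if x i then p else 1 - p) *
              (∑ v : Bool, (if v then p else 1 - p) *
                (if L (Function.update (Function.update x i1 v) i2 v) then 1 else 0))) := by
    have h := fiber_sum i1 i2 h12
      (fun x a b => (if a then p else 1 - p) * (if b then p else 1 - p) *
        ((∏ i ∈ (Finset.univ.erase i1).erase i2, if x i then p else 1 - p) *
          (∑ v : Bool, (if v then p else 1 - p) *
            (if L (Function.update (Function.update x i1 v) i2 v) then 1 else 0))))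
      (by
        intro x c d
        funext a b
        simp only [upd_upd, prod_inv])
    rw [h]
    rw [show ∀ s : ℝ, ((1:ℝ)/4) * (4 * s) = s from fun s => by ring]
    refine Finset.sum_congr rfl fun x _ => ?_
    rw [prod_split i1 i2 h12 (fun v => if v then p else 1 - p) x, Fintype.sum_bool,
      Fintype.sum_bool]
    ring
  have e3 : (∑ x : S → Bool, (∏ i, if x i then p else 1 - p) *
        (if ∀ z1 z2 : Bool,
            L (Function.update (Function.update x i1 z1) i2 z2) = (z1 || z2)
          then 1 else 0))
      = (1/4) * ∑ x : S → Bool, ∑ a : Bool, ∑ b : Bool,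
          (if a then p else 1 - p) * (if b then p else 1 - p) *
            ((∏ i ∈ (Finset.univ.erase i1).erase i2, if x i then p else 1 - p) *
              (if ∀ z1 z2 : Bool,
                  L (Function.update (Function.update x i1 z1) i2 z2) = (z1 || z2)
                then 1 else 0)) := by
    have h := fiber_sum i1 i2 h12
      (fun x a b => (if a then p else 1 - p) * (if b then p else 1 - p) *
        ((∏ i ∈ (Finset.univ.erase i1).erase i2, if x i then p else 1 - p) *
          (if ∀ z1 z2 : Bool,
              L (Function.update (Function.update x i1 z1) i2 z2) = (z1 || z2)
            then 1 else 0)))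
      (by
        intro x c d
        funext a b
        simp only [upd_upd, prod_inv])
    rw [h]
    rw [show ∀ s : ℝ, ((1:ℝ)/4) * (4 * s) = s from fun s => by ring]
    refine Finset.sum_congr rfl fun x _ => ?_
    rw [prod_split i1 i2 h12 (fun v => if v then p else 1 - p) x]
    ring
  have e4 : (∑ x : S → Bool, (∏ i, if x i then p else 1 - p) *
        (if ∀ z1 z2 : Bool,
            L (Function.update (Function.update x i1 z1) i2 z2) = (z1 && z2)
          then 1 else 0))
      = (1/4) * ∑ x : S → Bool, ∑ a : Bool, ∑ b : Bool,
          (if a then p else 1 - p) * (if b then p else 1 - p) *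
            ((∏ i ∈ (Finset.univ.erase i1).erase i2, if x i then p else 1 - p) *
              (if ∀ z1 z2 : Bool,
                  L (Function.update (Function.update x i1 z1) i2 z2) = (z1 && z2)
                then 1 else 0)) := by
    have h := fiber_sum i1 i2 h12
      (fun x a b => (if a then p else 1 - p) * (if b then p else 1 - p) *
        ((∏ i ∈ (Finset.univ.erase i1).erase i2, if x i then p else 1 - p) *
          (if ∀ z1 z2 : Bool,
              L (Function.update (Function.update x i1 z1) i2 z2) = (z1 && z2)
            then 1 else 0)))
      (by
        intro x c d
        funext a b
        simp only [upd_upd, prod_inv])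
    rw [h]
    rw [show ∀ s : ℝ, ((1:ℝ)/4) * (4 * s) = s from fun s => by ring]
    refine Finset.sum_congr rfl fun x _ => ?_
    rw [prod_split i1 i2 h12 (fun v => if v then p else 1 - p) x]
    ring
  rw [e1, e2, e3, e4]
  -- Step 2: the per-configuration identity
  have hsum : ∀ x : S → Bool,
      (∑ a : Bool, ∑ b : Bool,
          (if a then p else 1 - p) * (if b then p else 1 - p) *
            ((∏ i ∈ (Finset.univ.erase i1).erase i2, if x i then p else 1 - p) *
              (if L (Function.update (Function.update x i1 a) i2 b) then 1 else 0)))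
        - (∑ a : Bool, ∑ b : Bool,
          (if a then p else 1 - p) * (if b then p else 1 - p) *
            ((∏ i ∈ (Finset.univ.erase i1).erase i2, if x i then p else 1 - p) *
              (∑ v : Bool, (if v then p else 1 - p) *
                (if L (Function.update (Function.update x i1 v) i2 v) then 1 else 0))))
      = p * (1 - p) *
        ((∑ a : Bool, ∑ b : Bool,
          (if a then p else 1 - p) * (if b then p else 1 - p) *
            ((∏ i ∈ (Finset.univ.erase i1).erase i2, if x i then p else 1 - p) *
              (if ∀ z1 z2 : Bool,
                  L (Function.update (Function.update x i1 z1) i2 z2) = (z1 || z2)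
                then 1 else 0)))
          - (∑ a : Bool, ∑ b : Bool,
          (if a then p else 1 - p) * (if b then p else 1 - p) *
            ((∏ i ∈ (Finset.univ.erase i1).erase i2, if x i then p else 1 - p) *
              (if ∀ z1 z2 : Bool,
                  L (Function.update (Function.update x i1 z1) i2 z2) = (z1 && z2)
                then 1 else 0)))) := by
    intro x
    clear e1 e2 e3 e4
    have hAB : L (Function.update (Function.update x i1 false) i2 false) = true →
        L (Function.update (Function.update x i1 false) i2 true) = true := by
      intro h
      have h2 := hL (upd_le i1 i2 false false false true le_rfl (Bool.false_le true) x)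
      rw [h] at h2
      exact true_le_eq _ h2
    have hAC : L (Function.update (Function.update x i1 false) i2 false) = true →
        L (Function.update (Function.update x i1 true) i2 false) = true := by
      intro h
      have h2 := hL (upd_le i1 i2 false false true false (Bool.false_le true) le_rfl x)
      rw [h] at h2
      exact true_le_eq _ h2
    have hBD : L (Function.update (Function.update x i1 false) i2 true) = true →
        L (Function.update (Function.update x i1 true) i2 true) = true := by
      intro h
      have h2 := hL (upd_le i1 i2 false true true true (Bool.false_le true) le_rfl x)
      rw [h] at h2
      exact true_le_eq _ h2
    have hCD : L (Function.update (Function.update x i1 true) i2 false) = true →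
        L (Function.update (Function.update x i1 true) i2 true) = true := by
      intro h
      have h2 := hL (upd_le i1 i2 true false true true le_rfl (Bool.false_le true) x)
      rw [h] at h2
      exact true_le_eq _ h2
    simp only [Fintype.sum_bool, Bool.forall_bool, Bool.or_false, Bool.or_true,
      Bool.false_or, Bool.true_or, Bool.and_false, Bool.and_true, Bool.false_and,
      Bool.true_and, Bool.or_self, Bool.and_self]
    generalize (∏ i ∈ (Finset.univ.erase i1).erase i2, if x i then p else 1 - p : ℝ) = Wx
    generalize hA : L (Function.update (Function.update x i1 false) i2 false) = A at hAB hAC ⊢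
    generalize hB : L (Function.update (Function.update x i1 false) i2 true) = B at hAB hBD ⊢
    generalize hC : L (Function.update (Function.update x i1 true) i2 false) = C at hAC hCD ⊢
    generalize hD : L (Function.update (Function.update x i1 true) i2 true) = D at hBD hCD ⊢
    cases A <;> cases B <;> cases C <;> cases D <;> simp_all <;> ring
  -- Step 3: conclude
  have key : (∑ x : S → Bool, ∑ a : Bool, ∑ b : Bool,
          (if a then p else 1 - p) * (if b then p else 1 - p) *
            ((∏ i ∈ (Finset.univ.erase i1).erase i2, if x i then p else 1 - p) *
              (if L (Function.update (Function.update x i1 a) i2 b) then 1 else 0)))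
        - (∑ x : S → Bool, ∑ a : Bool, ∑ b : Bool,
          (if a then p else 1 - p) * (if b then p else 1 - p) *
            ((∏ i ∈ (Finset.univ.erase i1).erase i2, if x i then p else 1 - p) *
              (∑ v : Bool, (if v then p else 1 - p) *
                (if L (Function.update (Function.update x i1 v) i2 v) then 1 else 0))))
      = p * (1 - p) *
        ((∑ x : S → Bool, ∑ a : Bool, ∑ b : Bool,
          (if a then p else 1 - p) * (if b then p else 1 - p) *
            ((∏ i ∈ (Finset.univ.erase i1).erase i2, if x i then p else 1 - p) *
              (if ∀ z1 z2 : Bool,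
                  L (Function.update (Function.update x i1 z1) i2 z2) = (z1 || z2)
                then 1 else 0)))
          - (∑ x : S → Bool, ∑ a : Bool, ∑ b : Bool,
          (if a then p else 1 - p) * (if b then p else 1 - p) *
            ((∏ i ∈ (Finset.univ.erase i1).erase i2, if x i then p else 1 - p) *
              (if ∀ z1 z2 : Bool,
                  L (Function.update (Function.update x i1 z1) i2 z2) = (z1 && z2)
                then 1 else 0)))) := by
    rw [← Finset.sum_sub_distrib, ← Finset.sum_sub_distrib, Finset.mul_sum]
    exact Finset.sum_congr rfl fun x _ => hsum x
  linear_combination key / 4
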